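/- arXiv:2009.09829 — 4 statements merged into one kernel-verified Lean document; each statement's English description precedes it below -/
import Mathlib

section
/- Let H_cts, H(t) ∈ ℝ^{n×n} be symmetric with H_cts ⪰ Λ₀ I (Λ₀ > 0), and suppose ‖H(t) - H_cts‖ ≤ Λ₀/2. Let λ > 0, κ ∈ (0,1], Y ∈ ℝⁿ, u* = κ²H_cts(κ²H_cts+λI)^{-1}Y, and let u(t) satisfy du/dt = κ²H(t)(Y - u(t)) - λu(t). Then d/dt‖u(t)-u*‖₂² ≤ -(κ²Λ₀+λ)‖u(t)-u*‖₂² + 2κ²‖H(t)-H_cts‖·‖u(t)-u*‖₂·‖Y-u*‖₂. -/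
open Matrix

set_option maxHeartbeats 1000000 in
/-- Linear convergence of neural network training (differential form): if the dynamic kernel
`H(t)` stays within operator norm `Λ₀/2` of `H_cts ⪰ Λ₀ I` and
`du/dt = κ² H(t) (Y - u) - λ u`, then
`d/dt ‖u - u*‖² ≤ -(κ²Λ₀+λ)‖u-u*‖² + 2κ²‖H(t)-H_cts‖ ‖u-u*‖ ‖Y-u*‖`. -/
theorem nn_flow_deriv_bound {n : ℕ} (Hcts : Matrix (Fin n) (Fin n) ℝ) (hHcts : Hcts.IsHermitian)
    (Λ₀ : ℝ) (hΛ₀ : 0 < Λ₀) (hpd : (Hcts - Λ₀ • 1).PosSemidef)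
    (H : ℝ → Matrix (Fin n) (Fin n) ℝ) (hHsym : ∀ t, (H t).IsHermitian)
    (hclose : ∀ t, ‖Matrix.toEuclideanCLM (𝕜 := ℝ) (H t - Hcts)‖ ≤ Λ₀ / 2)
    (l κ : ℝ) (hl : 0 < l) (hκ0 : 0 < κ) (hκ1 : κ ≤ 1)
    (Y ustar : Fin n → ℝ)
    (hstar : ustar = (κ ^ 2 • Hcts).mulVec ((κ ^ 2 • Hcts + l • 1)⁻¹.mulVec Y))
    (u : ℝ → (Fin n → ℝ))
    (hu : ∀ t, HasDerivAt u (κ ^ 2 • (H t).mulVec (Y - u t) - l • u t) t) :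
    ∀ t,
      deriv (fun s => ‖(EuclideanSpace.equiv (Fin n) ℝ).symm (u s - ustar)‖ ^ 2) t ≤
        -(κ ^ 2 * Λ₀ + l) * ‖(EuclideanSpace.equiv (Fin n) ℝ).symm (u t - ustar)‖ ^ 2 +
        2 * κ ^ 2 * ‖Matrix.toEuclideanCLM (𝕜 := ℝ) (H t - Hcts)‖ *
          ‖(EuclideanSpace.equiv (Fin n) ℝ).symm (u t - ustar)‖ *
          ‖(EuclideanSpace.equiv (Fin n) ℝ).symm (Y - ustar)‖ := by
  intro t
  set iE := (EuclideanSpace.equiv (Fin n) ℝ).symm with hiE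
  -- basic translation lemmas
  have hinner : ∀ x y : Fin n → ℝ, (inner ℝ (iE x) (iE y) : ℝ) = x ⬝ᵥ y := by
    intro x y
    rw [show (iE x : EuclideanSpace ℝ (Fin n)) = WithLp.toLp 2 x from rfl,
      show (iE y : EuclideanSpace ℝ (Fin n)) = WithLp.toLp 2 y from rfl,
      EuclideanSpace.inner_toLp_toLp]
    simp [dotProduct, mul_comm]
  have hmul : ∀ (M : Matrix (Fin n) (Fin n) ℝ) (x : Fin n → ℝ),
      (iE (M.mulVec x) : EuclideanSpace ℝ (Fin n)) = Matrix.toEuclideanCLM (𝕜 := ℝ) M (iE x) := by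
    intro M x
    rw [show (iE x : EuclideanSpace ℝ (Fin n)) = WithLp.toLp 2 x from rfl,
      toEuclideanCLM_toLp]
    rfl
  have hnormsq : ∀ x : Fin n → ℝ, x ⬝ᵥ x = ‖(iE x : EuclideanSpace ℝ (Fin n))‖ ^ 2 := by
    intro x
    rw [← hinner, real_inner_self_eq_norm_sq]
  -- positivity facts
  have hκ2 : (0:ℝ) < κ ^ 2 := by positivity
  have hHpsd : Hcts.PosSemidef := by
    refine PosSemidef.of_dotProduct_mulVec_nonneg hHcts (fun x => ?_)
    have h2 := hpd.dotProduct_mulVec_nonneg x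
    have h3 : (0:ℝ) ≤ Λ₀ * (star x ⬝ᵥ x) :=
      mul_nonneg hΛ₀.le (dotProduct_star_self_nonneg x)
    have : star x ⬝ᵥ (Hcts - Λ₀ • 1).mulVec x
        = star x ⬝ᵥ Hcts.mulVec x - Λ₀ * (star x ⬝ᵥ x) := by
      rw [sub_mulVec, dotProduct_sub, smul_mulVec, one_mulVec, dotProduct_smul,
        smul_eq_mul]
    rw [this] at h2
    linarith
  set A := κ ^ 2 • Hcts with hA
  set B := A + l • 1 with hB
  have hApsd : A.PosSemidef := by
    refine PosSemidef.of_dotProduct_mulVec_nonneg ?_ (fun x => ?_)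
    · show (κ ^ 2 • Hcts)ᴴ = κ ^ 2 • Hcts
      rw [conjTranspose_smul, star_trivial, hHcts.eq]
    · rw [hA, smul_mulVec, dotProduct_smul, smul_eq_mul]
      exact mul_nonneg hκ2.le (hHpsd.dotProduct_mulVec_nonneg x)
  have hl1pd : (l • (1 : Matrix (Fin n) (Fin n) ℝ)).PosDef := by
    refine PosDef.of_dotProduct_mulVec_pos ?_ (fun x hx => ?_)
    · show (l • (1:Matrix (Fin n) (Fin n) ℝ))ᴴ = l • 1
      rw [conjTranspose_smul, star_trivial, conjTranspose_one]
    rw [smul_mulVec, one_mulVec, dotProduct_smul, smul_eq_mul]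
    exact mul_pos hl (dotProduct_star_self_pos_iff.mpr hx)
  have hBpd : B.PosDef := Matrix.PosDef.posSemidef_add hApsd hl1pd
  have hBinv : B * B⁻¹ = 1 := Matrix.mul_nonsing_inv B (isUnit_iff_isUnit_det B |>.mp hBpd.isUnit)
  have hcomm : B * A = A * B := by
    simp only [hB, add_mul, mul_add, Matrix.smul_mul, Matrix.mul_smul, one_mul, mul_one]
  -- key identity for ustar
  have hBu : B.mulVec ustar = A.mulVec Y := by
    rw [hstar, mulVec_mulVec, mulVec_mulVec, hcomm, Matrix.mul_assoc, hBinv, Matrix.mul_one]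
  have hkey : κ ^ 2 • Hcts.mulVec (Y - ustar) = l • ustar := by
    have h1 : A.mulVec (Y - ustar) = A.mulVec Y - A.mulVec ustar := mulVec_sub A Y ustar
    have h2 : A.mulVec Y = A.mulVec ustar + l • ustar := by
      have h := hBu
      rw [hB, add_mulVec] at h
      simp only [smul_mulVec, one_mulVec] at h
      rw [← h]
    calc κ ^ 2 • Hcts.mulVec (Y - ustar) = A.mulVec (Y - ustar) :=
          (smul_mulVec (κ ^ 2) Hcts (Y - ustar)).symm
      _ = A.mulVec Y - A.mulVec ustar := h1
      _ = l • ustar := by rw [h2]; abel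
  -- the derivative direction, rewritten
  set e := u t - ustar with he
  set Δ := H t - Hcts with hΔ
  set D := κ ^ 2 • (H t).mulVec (Y - u t) - l • u t with hD
  have hDvec : D = κ ^ 2 • Δ.mulVec (Y - ustar) - κ ^ 2 • (H t).mulVec e - l • e := by
    have h2 : (H t).mulVec (Y - u t) = (H t).mulVec (Y - ustar) - (H t).mulVec e := by
      rw [← mulVec_sub]; congr 1; rw [he]; abel
    have h1 : Δ.mulVec (Y - ustar) = (H t).mulVec (Y - ustar) - Hcts.mulVec (Y - ustar) := by
      rw [hΔ, sub_mulVec]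
    rw [hD, h2, h1, smul_sub, smul_sub, hkey, he]
    module
  -- derivative of the squared norm
  have hde : HasDerivAt (fun s => (iE (u s - ustar) : EuclideanSpace ℝ (Fin n))) (iE D) t := by
    have h0 : HasDerivAt (fun s => u s - ustar) D t := (hu t).sub_const ustar
    exact (iE.toContinuousLinearMap.hasFDerivAt.comp_hasDerivAt t h0)
  have hgderiv : HasDerivAt (fun s => ‖(iE (u s - ustar) : EuclideanSpace ℝ (Fin n))‖ ^ 2)
      ((inner ℝ (iE e) (iE D) : ℝ) + (inner ℝ (iE D) (iE e) : ℝ)) t := by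
    have := (hde.inner ℝ hde)
    have heq : (fun s => (inner ℝ (iE (u s - ustar)) (iE (u s - ustar)) : ℝ))
        = fun s => ‖(iE (u s - ustar) : EuclideanSpace ℝ (Fin n))‖ ^ 2 := by
      funext s; rw [real_inner_self_eq_norm_sq]
    rw [heq] at this
    simpa [he] using this
  have hderiv : deriv (fun s => ‖(iE (u s - ustar) : EuclideanSpace ℝ (Fin n))‖ ^ 2) t
      = 2 * (e ⬝ᵥ D) := by
    rw [hgderiv.deriv, hinner, hinner, dotProduct_comm D e]; ring
  -- bounds
  set a := ‖(iE e : EuclideanSpace ℝ (Fin n))‖ with ha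
  set b := ‖(iE (Y - ustar) : EuclideanSpace ℝ (Fin n))‖ with hb
  set c := ‖Matrix.toEuclideanCLM (𝕜 := ℝ) Δ‖ with hc
  have ha0 : 0 ≤ a := norm_nonneg _
  have hb0 : 0 ≤ b := norm_nonneg _
  have hc0 : 0 ≤ c := norm_nonneg _
  have hbound1 : e ⬝ᵥ Δ.mulVec (Y - ustar) ≤ c * a * b := by
    rw [← hinner, hmul]
    calc (inner ℝ (iE e) (Matrix.toEuclideanCLM (𝕜 := ℝ) Δ (iE (Y - ustar))) : ℝ)
        ≤ a * ‖Matrix.toEuclideanCLM (𝕜 := ℝ) Δ (iE (Y - ustar))‖ := real_inner_le_norm _ _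
      _ ≤ a * (c * b) := by
          exact mul_le_mul_of_nonneg_left ((Matrix.toEuclideanCLM (𝕜 := ℝ) Δ).le_opNorm _) ha0
      _ = c * a * b := by ring
  have hbound2 : Λ₀ * a ^ 2 ≤ e ⬝ᵥ Hcts.mulVec e := by
    have h2 := hpd.dotProduct_mulVec_nonneg e
    have hse : star e = e := by simp
    rw [hse, sub_mulVec, dotProduct_sub, smul_mulVec, one_mulVec, dotProduct_smul,
      smul_eq_mul, hnormsq, ← ha] at h2
    linarith
  have hbound3 : -(c * a ^ 2) ≤ e ⬝ᵥ Δ.mulVec e := by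
    have h := abs_real_inner_le_norm (iE e : EuclideanSpace ℝ (Fin n))
      (Matrix.toEuclideanCLM (𝕜 := ℝ) Δ (iE e))
    have h2 : ‖(iE (Δ.mulVec e) : EuclideanSpace ℝ (Fin n))‖ ≤ c * a := by
      rw [hmul]; exact (Matrix.toEuclideanCLM (𝕜 := ℝ) Δ).le_opNorm _
    rw [← hmul, hinner] at h
    have h3 := neg_abs_le (e ⬝ᵥ Δ.mulVec e)
    nlinarith [mul_le_mul_of_nonneg_left h2 ha0]
  have hcΛ : c ≤ Λ₀ / 2 := hclose t
  -- combine
  have hdot : e ⬝ᵥ D = κ ^ 2 * (e ⬝ᵥ Δ.mulVec (Y - ustar)) - κ ^ 2 * (e ⬝ᵥ (H t).mulVec e)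
      - l * (e ⬝ᵥ e) := by
    rw [hDvec, dotProduct_sub, dotProduct_sub, dotProduct_smul, dotProduct_smul,
      dotProduct_smul, smul_eq_mul, smul_eq_mul, smul_eq_mul]
  have hHte : e ⬝ᵥ (H t).mulVec e = e ⬝ᵥ Hcts.mulVec e + e ⬝ᵥ Δ.mulVec e := by
    rw [hΔ, sub_mulVec, dotProduct_sub]; ring
  have hee : e ⬝ᵥ e = a ^ 2 := by rw [hnormsq, ha]
  rw [hderiv]
  clear hD
  have hca : c * a ^ 2 ≤ Λ₀ / 2 * a ^ 2 := by nlinarith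
  rw [hdot, hHte, hee]
  nlinarith [mul_le_mul_of_nonneg_left hbound1 hκ2.le,
    mul_le_mul_of_nonneg_left hbound2 hκ2.le,
    mul_le_mul_of_nonneg_left hbound3 hκ2.le,
    mul_le_mul_of_nonneg_left hca hκ2.le,
    mul_nonneg hl.le (sq_nonneg a)]
end

section
/- Let V be orthogonal and Σ diagonal positive definite with VᵀΣ²V = K + λI, where K is symmetric PSD with eigenvalues λ₁ ≥ ... ≥ λₙ and λ ∈ (0, ‖K‖). For w in the support of the normalized upper leverage distribution q̄_λ = q̃_λ/s (with q̃_λ ≥ q_λ pointwise), define Y(w) = (p(w)/q̄_λ(w))·Σ^{-1}VΦ(w)Φ(w)ᵀVᵀΣ^{-1}. Then ‖Y(w)‖ ≤ s and Y(w)² ⪯ s·Y(w), and hence E_{w∼q̄_λ}[Y(w)²] ⪯ s·diag(λ₁/(λ₁+λ), ..., λₙ/(λₙ+λ)). -/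
open Matrix MeasureTheory

attribute [local instance] Matrix.normedAddCommGroup Matrix.normedSpace

lemma conjT_real {a b : ℕ} (B : Matrix (Fin a) (Fin b) ℝ) : Bᴴ = Bᵀ := by
  ext i j; simp [Matrix.conjTranspose_apply]

lemma psd_smul {n : ℕ} {A : Matrix (Fin n) (Fin n) ℝ} (hA : A.PosSemidef) {c : ℝ}
    (hc : 0 ≤ c) : (c • A).PosSemidef := by
  rw [Matrix.posSemidef_iff_dotProduct_mulVec]
  constructor
  · unfold Matrix.IsHermitian
    rw [Matrix.conjTranspose_smul, hA.1]
    congr 1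
  · intro x
    rw [Matrix.smul_mulVec, dotProduct_smul]
    exact mul_nonneg hc (hA.dotProduct_mulVec_nonneg x)

lemma trace_BBt {n m : ℕ} (B : Matrix (Fin n) (Fin m) ℝ) :
    (B * Bᵀ).trace = ∑ i, ∑ j, (B i j) ^ 2 := by
  simp [Matrix.trace, Matrix.diag, Matrix.mul_apply, sq]

lemma trace_BBt_nonneg {n m : ℕ} (B : Matrix (Fin n) (Fin m) ℝ) :
    0 ≤ (B * Bᵀ).trace := by
  rw [trace_BBt]
  positivity

lemma cs_quad {n m : ℕ} (B : Matrix (Fin n) (Fin m) ℝ) (x : Fin n → ℝ) :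
    (Bᵀ *ᵥ x) ⬝ᵥ (Bᵀ *ᵥ x) ≤ (B * Bᵀ).trace * (x ⬝ᵥ x) := by
  rw [trace_BBt]
  have h1 : (Bᵀ *ᵥ x) ⬝ᵥ (Bᵀ *ᵥ x) = ∑ j, (∑ i, B i j * x i) ^ 2 := by
    simp [dotProduct, Matrix.mulVec, Matrix.transpose_apply, sq]
  have h2 : x ⬝ᵥ x = ∑ i, (x i) ^ 2 := by simp [dotProduct, sq]
  rw [h1, h2, Finset.sum_comm, Finset.sum_mul]
  exact Finset.sum_le_sum fun j _ => Finset.sum_mul_sq_le_sq_mul_sq _ _ _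

lemma psd_trace_sub {n m : ℕ} (B : Matrix (Fin n) (Fin m) ℝ) :
    ((B * Bᵀ).trace • (1 : Matrix (Fin n) (Fin n) ℝ) - B * Bᵀ).PosSemidef := by
  have hH : (B * Bᵀ).IsHermitian := by
    have := Matrix.posSemidef_self_mul_conjTranspose B
    rw [conjT_real] at this
    exact this.1
  rw [Matrix.posSemidef_iff_dotProduct_mulVec]
  constructor
  · unfold Matrix.IsHermitian
    rw [Matrix.conjTranspose_sub, Matrix.conjTranspose_smul, Matrix.conjTranspose_one, hH]
    norm_num
  · intro x
    have hx : star x = x := rfl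
    rw [hx, Matrix.sub_mulVec, dotProduct_sub, Matrix.smul_mulVec,
      Matrix.one_mulVec, dotProduct_smul, sub_nonneg]
    have : (B * Bᵀ) *ᵥ x = B *ᵥ (Bᵀ *ᵥ x) := (Matrix.mulVec_mulVec _ _ _).symm
    rw [this]
    have : x ⬝ᵥ (B *ᵥ (Bᵀ *ᵥ x)) = (Bᵀ *ᵥ x) ⬝ᵥ (Bᵀ *ᵥ x) := by
      rw [dotProduct_mulVec, ← Matrix.mulVec_transpose, dotProduct_comm]
    rw [this, smul_eq_mul]
    exact cs_quad B x

lemma psd_one_sub {n m : ℕ} (B : Matrix (Fin n) (Fin m) ℝ) (c s : ℝ) (hc : 0 ≤ c)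
    (hts : c * (B * Bᵀ).trace ≤ s) :
    (s • (1 : Matrix (Fin n) (Fin n) ℝ) - c • (B * Bᵀ)).PosSemidef := by
  have h : s • (1 : Matrix (Fin n) (Fin n) ℝ) - c • (B * Bᵀ)
      = (s - c * (B * Bᵀ).trace) • (1 : Matrix (Fin n) (Fin n) ℝ)
        + c • ((B * Bᵀ).trace • (1 : Matrix (Fin n) (Fin n) ℝ) - B * Bᵀ) := by
    rw [smul_sub, sub_smul, smul_smul]
    abel
  rw [h]
  exact Matrix.PosSemidef.add (psd_smul Matrix.PosSemidef.one (by linarith))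
    (psd_smul (psd_trace_sub B) hc)

lemma psd_smul_sub_sq {n m : ℕ} (B : Matrix (Fin n) (Fin m) ℝ) (c s : ℝ) (hc : 0 ≤ c)
    (hts : c * (B * Bᵀ).trace ≤ s) :
    (s • (c • (B * Bᵀ)) - (c • (B * Bᵀ)) * (c • (B * Bᵀ))).PosSemidef := by
  have htr : (Bᵀ * Bᵀᵀ).trace = (B * Bᵀ).trace := by
    rw [Matrix.transpose_transpose, Matrix.trace_mul_comm]
  have hinner : (s • (1 : Matrix (Fin m) (Fin m) ℝ) - c • (Bᵀ * Bᵀᵀ)).PosSemidef :=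
    psd_one_sub Bᵀ c s hc (htr ▸ hts)
  have h2 := (psd_smul hinner hc).mul_mul_conjTranspose_same B
  rw [conjT_real] at h2
  have heq : B * (c • (s • (1 : Matrix (Fin m) (Fin m) ℝ) - c • (Bᵀ * Bᵀᵀ))) * Bᵀ
      = s • (c • (B * Bᵀ)) - (c • (B * Bᵀ)) * (c • (B * Bᵀ)) := by
    rw [Matrix.transpose_transpose]
    simp only [smul_sub, Matrix.mul_smul, Matrix.smul_mul, Matrix.mul_sub, Matrix.sub_mul,
      smul_smul, Matrix.mul_one, Matrix.mul_assoc]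
    rw [mul_comm c s]
  rwa [heq] at h2

lemma norm_le_of_sq {n : ℕ} {A : Matrix (Fin n) (Fin n) ℝ} (hA : A.IsHermitian) {s : ℝ}
    (hs : 0 ≤ s) (h : ((s ^ 2) • (1 : Matrix (Fin n) (Fin n) ℝ) - A * A).PosSemidef) :
    ‖Matrix.toEuclideanCLM (𝕜 := ℝ) A‖ ≤ s := by
  have hAt : Aᵀ = A := by rw [← conjT_real A, hA]
  refine ContinuousLinearMap.opNorm_le_bound _ hs fun x => ?_
  set y : Fin n → ℝ := fun i => x i with hy
  have hq := h.dotProduct_mulVec_nonneg y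
  have hsy : star y = y := rfl
  rw [hsy, Matrix.sub_mulVec, dotProduct_sub, Matrix.smul_mulVec, Matrix.one_mulVec,
    dotProduct_smul, sub_nonneg, smul_eq_mul] at hq
  have hzy : ∀ i, (Matrix.toEuclideanCLM (𝕜 := ℝ) A) x i = (A *ᵥ y) i := by
    intro i
    rfl
  have hAx : ‖(Matrix.toEuclideanCLM (𝕜 := ℝ) A) x‖ ^ 2 = y ⬝ᵥ ((A * A) *ᵥ y) := by
    rw [EuclideanSpace.norm_eq, Real.sq_sqrt (by positivity)]
    have : (A *ᵥ y) ⬝ᵥ (A *ᵥ y) = y ⬝ᵥ ((A * A) *ᵥ y) := by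
      rw [dotProduct_mulVec, ← Matrix.mulVec_transpose, hAt, dotProduct_comm,
        Matrix.mulVec_mulVec]
    rw [← this]
    simp [hzy, dotProduct, sq, Real.norm_eq_abs, abs_mul_abs_self]
  have hx : ‖x‖ ^ 2 = y ⬝ᵥ y := by
    rw [EuclideanSpace.norm_eq, Real.sq_sqrt (by positivity)]
    simp [dotProduct, sq, Real.norm_eq_abs, abs_mul_abs_self, hy]
  nlinarith [norm_nonneg ((Matrix.toEuclideanCLM (𝕜 := ℝ) A) x), norm_nonneg x,
    mul_nonneg hs (norm_nonneg x)]

noncomputable def quadCLM (n : ℕ) (x : Fin n → ℝ) : Matrix (Fin n) (Fin n) ℝ →L[ℝ] ℝ :=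
  LinearMap.toContinuousLinearMap
    { toFun := fun A => x ⬝ᵥ (A *ᵥ x)
      map_add' := fun A B => by
        show x ⬝ᵥ ((A + B) *ᵥ x) = _
        rw [Matrix.add_mulVec, dotProduct_add]
      map_smul' := fun c A => by
        show x ⬝ᵥ ((c • A) *ᵥ x) = _
        rw [Matrix.smul_mulVec, dotProduct_smul]; rfl }

noncomputable def entryCLM (n : ℕ) (i j : Fin n) : Matrix (Fin n) (Fin n) ℝ →L[ℝ] ℝ :=
  LinearMap.toContinuousLinearMap
    { toFun := fun A => A i j
      map_add' := fun A B => rfl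
      map_smul' := fun c A => rfl }

lemma psd_integral {n d : ℕ} {F : (Fin d → ℝ) → Matrix (Fin n) (Fin n) ℝ}
    (hF : @Integrable _ _ SeminormedAddGroup.toContinuousENorm _ _ F volume) (h : ∀ w, (F w).PosSemidef) : (∫ w, F w).PosSemidef := by
  rw [Matrix.posSemidef_iff_dotProduct_mulVec]
  constructor
  · ext i j
    rw [Matrix.conjTranspose_apply]
    have h1 : (∫ w, F w) i j = ∫ w, F w i j :=
      (ContinuousLinearMap.integral_comp_comm (entryCLM n i j) hF).symm
    have h2 : (∫ w, F w) j i = ∫ w, F w j i :=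
      (ContinuousLinearMap.integral_comp_comm (entryCLM n j i) hF).symm
    have h3 : ∀ w, F w j i = F w i j := by
      intro w
      have := congrFun (congrFun (h w).1 i) j
      simpa [Matrix.conjTranspose_apply] using this
    simp only [star_trivial, h1, h2]
    exact integral_congr_ae (Filter.Eventually.of_forall h3)
  · intro x
    have hsx : star x = x := rfl
    rw [hsx]
    have h1 : x ⬝ᵥ ((∫ w, F w) *ᵥ x) = ∫ w, x ⬝ᵥ (F w *ᵥ x) :=
      (ContinuousLinearMap.integral_comp_comm (quadCLM n x) hF).symm
    rw [h1]
    apply integral_nonneg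
    intro w
    have := (h w).dotProduct_mulVec_nonneg x
    rwa [hsx] at this

lemma B_eq_zero_of_trace {n m : ℕ} (B : Matrix (Fin n) (Fin m) ℝ)
    (h : (B * Bᵀ).trace = 0) : B = 0 := by
  rw [trace_BBt] at h
  ext i j
  have h1 := (Finset.sum_eq_zero_iff_of_nonneg (fun i _ => by positivity)).mp h i (by simp)
  have h2 := (Finset.sum_eq_zero_iff_of_nonneg (fun j _ => by positivity)).mp h1 j (by simp)
  simpa using pow_eq_zero_iff (n := 2) (by norm_num) |>.mp h2

/-- The random matrix `Y(w) = (p(w)/q̄_λ(w)) Σ⁻¹VΦ(w)Φ(w)ᵀVᵀΣ⁻¹` appearing in the leverage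
score sampling argument (here `q̄_λ(w) = q̃_λ(w)/s`, so `p(w)/q̄_λ(w) = p(w)·s/q̃_λ(w)`). -/
noncomputable def levSampleMatrix {n d₁ d₂ : ℕ}
    (Φ : (Fin d₁ → ℝ) → Matrix (Fin n) (Fin d₂) ℝ)
    (p qtilde : (Fin d₁ → ℝ) → ℝ) (s : ℝ)
    (S V : Matrix (Fin n) (Fin n) ℝ) (w : Fin d₁ → ℝ) : Matrix (Fin n) (Fin n) ℝ :=
  ((p w * s) / qtilde w) • (S⁻¹ * V * (Φ w * (Φ w)ᵀ) * Vᵀ * S⁻¹)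

/-- Bounds on the leverage-score sampling estimator: `‖Y(w)‖ ≤ s`, `Y(w)² ⪯ s·Y(w)`, and
`E_{w∼q̄_λ}[Y(w)²] ⪯ s · Σ⁻¹VKVᵀΣ⁻¹` (the diagonal matrix `diag(λᵢ/(λᵢ+λ))`). -/
theorem levSampleMatrix_bounds {n d₁ d₂ : ℕ}
    (Φ : (Fin d₁ → ℝ) → Matrix (Fin n) (Fin d₂) ℝ)
    (p : (Fin d₁ → ℝ) → ℝ) (hp : ∀ w, 0 ≤ p w) (hpdens : ∫ w, p w = 1)
    (K : Matrix (Fin n) (Fin n) ℝ) (hKpsd : K.PosSemidef)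
    (hint : @Integrable _ _ SeminormedAddGroup.toContinuousENorm _ _ (fun w => p w • (Φ w * (Φ w)ᵀ)) volume)
    (hK : K = ∫ w, p w • (Φ w * (Φ w)ᵀ))
    (l : ℝ) (hl : 0 < l) (hlK : l < ‖Matrix.toEuclideanCLM (𝕜 := ℝ) K‖)
    (V : Matrix (Fin n) (Fin n) ℝ) (hV1 : Vᵀ * V = 1) (hV2 : V * Vᵀ = 1)
    (σ : Fin n → ℝ) (hσ : ∀ i, 0 < σ i)
    (S : Matrix (Fin n) (Fin n) ℝ) (hS : S = Matrix.diagonal σ)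
    (hdecomp : Vᵀ * (S * S) * V = K + l • 1)
    (qtilde : (Fin d₁ → ℝ) → ℝ)
    (hmaj : ∀ w, p w * ((Φ w)ᵀ * (K + l • 1)⁻¹ * Φ w).trace ≤ qtilde w)
    (s : ℝ) (hs : s = ∫ w, qtilde w) (hqint : Integrable qtilde) (hs0 : 0 < s)
    (hint2 : @Integrable _ _ SeminormedAddGroup.toContinuousENorm _ _ (fun w => (qtilde w / s) •
      (levSampleMatrix Φ p qtilde s S V w * levSampleMatrix Φ p qtilde s S V w)) volume) :
    (∀ w, 0 < qtilde w →
        ‖Matrix.toEuclideanCLM (𝕜 := ℝ) (levSampleMatrix Φ p qtilde s S V w)‖ ≤ s) ∧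
    (∀ w, 0 < qtilde w →
        (s • levSampleMatrix Φ p qtilde s S V w -
          levSampleMatrix Φ p qtilde s S V w * levSampleMatrix Φ p qtilde s S V w).PosSemidef) ∧
    (s • (S⁻¹ * (V * K * Vᵀ) * S⁻¹) -
      ∫ w, (qtilde w / s) •
        (levSampleMatrix Φ p qtilde s S V w * levSampleMatrix Φ p qtilde s S V w)).PosSemidef := by
  have hσne : ∀ i, σ i ≠ 0 := fun i => (hσ i).ne'
  have hSinv : S⁻¹ = Matrix.diagonal (fun i => (σ i)⁻¹) := by
    apply Matrix.inv_eq_right_inv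
    rw [hS, Matrix.diagonal_mul_diagonal]
    have : (fun i => σ i * (σ i)⁻¹) = fun _ => (1 : ℝ) := funext fun i => mul_inv_cancel₀ (hσne i)
    rw [this, Matrix.diagonal_one]
  have hSSinv : S * S⁻¹ = 1 := by
    rw [hSinv, hS, Matrix.diagonal_mul_diagonal]
    have : (fun i => σ i * (σ i)⁻¹) = fun _ => (1 : ℝ) := funext fun i => mul_inv_cancel₀ (hσne i)
    rw [this, Matrix.diagonal_one]
  have hSinvsym : (S⁻¹)ᵀ = S⁻¹ := by rw [hSinv]; exact Matrix.diagonal_transpose _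
  set B : (Fin d₁ → ℝ) → Matrix (Fin n) (Fin d₂) ℝ := fun w => S⁻¹ * V * Φ w with hB
  have hM : ∀ w, S⁻¹ * V * (Φ w * (Φ w)ᵀ) * Vᵀ * S⁻¹ = B w * (B w)ᵀ := by
    intro w
    rw [hB]
    simp only [Matrix.transpose_mul, hSinvsym, Matrix.mul_assoc]
  have hinv : (K + l • 1)⁻¹ = Vᵀ * (S⁻¹ * S⁻¹) * V := by
    apply Matrix.inv_eq_right_inv
    rw [← hdecomp]
    calc Vᵀ * (S * S) * V * (Vᵀ * (S⁻¹ * S⁻¹) * V)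
        = Vᵀ * (S * (S * (V * Vᵀ) * S⁻¹) * S⁻¹) * V := by
          simp only [Matrix.mul_assoc]
      _ = 1 := by rw [hV2, Matrix.mul_one, hSSinv, Matrix.mul_one, hSSinv, Matrix.mul_one, hV1]
  have htrmat : ∀ w, (Φ w)ᵀ * (K + l • 1)⁻¹ * Φ w = (B w)ᵀ * B w := by
    intro w
    rw [hinv, hB]
    simp only [Matrix.transpose_mul, hSinvsym, Matrix.mul_assoc]
  have htr : ∀ w, ((Φ w)ᵀ * (K + l • 1)⁻¹ * Φ w).trace = (B w * (B w)ᵀ).trace := by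
    intro w
    rw [htrmat, Matrix.trace_mul_comm]
  have hmaj' : ∀ w, p w * (B w * (B w)ᵀ).trace ≤ qtilde w := by
    intro w
    rw [← htr]
    exact hmaj w
  have hq0 : ∀ w, 0 ≤ qtilde w := fun w =>
    le_trans (mul_nonneg (hp w) (trace_BBt_nonneg (B w))) (hmaj' w)
  have hY : ∀ w, levSampleMatrix Φ p qtilde s S V w
      = (p w * s / qtilde w) • (B w * (B w)ᵀ) := by
    intro w
    rw [levSampleMatrix, hM]
  have hc0 : ∀ w, 0 ≤ p w * s / qtilde w := fun w =>
    div_nonneg (mul_nonneg (hp w) hs0.le) (hq0 w)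
  have hkey : ∀ w, 0 < qtilde w → (p w * s / qtilde w) * (B w * (B w)ᵀ).trace ≤ s := by
    intro w hw
    have h2 := mul_le_mul_of_nonneg_right (hmaj' w) (le_of_lt (div_pos hs0 hw))
    calc p w * s / qtilde w * (B w * (B w)ᵀ).trace
        = (p w * (B w * (B w)ᵀ).trace) * (s / qtilde w) := by ring
      _ ≤ qtilde w * (s / qtilde w) := h2
      _ = s := by field_simp
  refine ⟨?_, ?_, ?_⟩
  · -- norm bound
    intro w hw
    rw [hY]
    set c := p w * s / qtilde w
    have hpsd : (c • (B w * (B w)ᵀ)).PosSemidef := by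
      apply psd_smul _ (hc0 w)
      have := Matrix.posSemidef_self_mul_conjTranspose (B w)
      rwa [conjT_real] at this
    apply norm_le_of_sq hpsd.1 hs0.le
    have heq : (s ^ 2) • (1 : Matrix (Fin n) (Fin n) ℝ)
        - (c • (B w * (B w)ᵀ)) * (c • (B w * (B w)ᵀ))
        = s • (s • (1 : Matrix (Fin n) (Fin n) ℝ) - c • (B w * (B w)ᵀ))
          + (s • (c • (B w * (B w)ᵀ)) - (c • (B w * (B w)ᵀ)) * (c • (B w * (B w)ᵀ))) := by
      module
    rw [heq]
    exact Matrix.PosSemidef.add (psd_smul (psd_one_sub (B w) c s (hc0 w) (hkey w hw)) hs0.le)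
      (psd_smul_sub_sq (B w) c s (hc0 w) (hkey w hw))
  · intro w hw
    rw [hY]
    exact psd_smul_sub_sq (B w) _ s (hc0 w) (hkey w hw)
  · set F : (Fin d₁ → ℝ) → Matrix (Fin n) (Fin n) ℝ := fun w =>
      (qtilde w / s) • (levSampleMatrix Φ p qtilde s S V w * levSampleMatrix Φ p qtilde s S V w)
      with hF
    set L : Matrix (Fin n) (Fin n) ℝ →L[ℝ] Matrix (Fin n) (Fin n) ℝ :=
      LinearMap.toContinuousLinearMap
        { toFun := fun X => S⁻¹ * V * X * Vᵀ * S⁻¹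
          map_add' := fun X Y => by
            simp only [Matrix.mul_add, Matrix.add_mul]
          map_smul' := fun c X => by
            simp only [Matrix.mul_smul, Matrix.smul_mul, RingHom.id_apply] } with hL
    have hGeq : (fun w => (p w * s) • (B w * (B w)ᵀ))
        = fun w => s • L (p w • (Φ w * (Φ w)ᵀ)) := by
      funext w
      show (p w * s) • (B w * (B w)ᵀ) = s • (S⁻¹ * V * (p w • (Φ w * (Φ w)ᵀ)) * Vᵀ * S⁻¹)
      rw [← hM]
      simp only [Matrix.mul_smul, Matrix.smul_mul, smul_smul]
      rw [mul_comm]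
    have hGint : @Integrable _ _ SeminormedAddGroup.toContinuousENorm _ _ (fun w => (p w * s) • (B w * (B w)ᵀ)) volume := by
      rw [hGeq]
      exact (L.integrable_comp hint).smul s
    have hintG : (∫ w, (p w * s) • (B w * (B w)ᵀ)) = s • (S⁻¹ * (V * K * Vᵀ) * S⁻¹) := by
      rw [hGeq, integral_smul]
      erw [ContinuousLinearMap.integral_comp_comm L hint]
      rw [← hK]
      show s • (S⁻¹ * V * K * Vᵀ * S⁻¹) = _
      simp only [Matrix.mul_assoc]
    have hpt : ∀ w, ((p w * s) • (B w * (B w)ᵀ) - F w).PosSemidef := by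
      intro w
      rcases (hq0 w).lt_or_eq with hw | hw
      · have heq : (p w * s) • (B w * (B w)ᵀ) - F w
            = (qtilde w / s) • (s • levSampleMatrix Φ p qtilde s S V w
                - levSampleMatrix Φ p qtilde s S V w * levSampleMatrix Φ p qtilde s S V w) := by
          rw [smul_sub]
          congr 1
          rw [hY, smul_smul, smul_smul]
          congr 1
          field_simp
        rw [heq]
        apply psd_smul _ (div_nonneg (hq0 w) hs0.le)
        rw [hY]
        exact psd_smul_sub_sq (B w) _ s (hc0 w) (hkey w hw)
      · have hY0 : levSampleMatrix Φ p qtilde s S V w = 0 := by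
          rw [hY, ← hw, div_zero, zero_smul]
        have hF0 : F w = 0 := by
          rw [hF]
          simp only [hY0, Matrix.mul_zero, smul_zero]
        have hpt0 : p w * (B w * (B w)ᵀ).trace = 0 :=
          le_antisymm (by rw [hw]; exact hmaj' w)
            (mul_nonneg (hp w) (trace_BBt_nonneg _))
        have hG0 : (p w * s) • (B w * (B w)ᵀ) = 0 := by
          rcases mul_eq_zero.mp hpt0 with h | h
          · rw [h, zero_mul, zero_smul]
          · rw [B_eq_zero_of_trace (B w) h]
            simp
        rw [hG0, hF0, sub_zero]
        exact Matrix.PosSemidef.zero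
    have hint3 : @Integrable _ _ SeminormedAddGroup.toContinuousENorm _ _ (fun w => (p w * s) • (B w * (B w)ᵀ) - F w) volume := hGint.sub hint2
    have hres := psd_integral hint3 hpt
    rwa [integral_sub hGint hint2, hintG] at hres
end

section
/- Let H_cts, H̄ be n×n symmetric PSD matrices with λ_min(H_cts) = Λ₀ > 0, λ > 0, Δ ∈ (0,1/2), Y ∈ ℝⁿ. If (1-Δ)(H_cts+λI) ⪯ H̄+λI ⪯ (1+Δ)(H_cts+λI), then the two ridge-regression optima u* = H_cts(H_cts+λI)^{-1}Y and ū* = H̄(H̄+λI)^{-1}Y satisfy ‖ū* - u*‖₂ ≤ 2λΔ‖Y‖₂/(Λ₀+λ). -/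
open Matrix

private lemma dot_symm' {n : ℕ} (M : Matrix (Fin n) (Fin n) ℝ) (hM : M.IsHermitian)
    (u w : Fin n → ℝ) : u ⬝ᵥ M *ᵥ w = w ⬝ᵥ M *ᵥ u := by
  have hMs : Mᵀ = M := by simpa [Matrix.IsHermitian] using hM
  have h : M *ᵥ u = u ᵥ* M := by rw [← Matrix.vecMul_transpose, hMs]
  rw [Matrix.dotProduct_mulVec, ← h, dotProduct_comm]

private lemma dot_self_nonneg' {n : ℕ} (v : Fin n → ℝ) : 0 ≤ v ⬝ᵥ v :=
  Finset.sum_nonneg fun i _ => mul_self_nonneg (v i)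

private lemma norm_sq_eq_dot' {n : ℕ} (v : Fin n → ℝ) :
    ‖(EuclideanSpace.equiv (Fin n) ℝ).symm v‖ ^ 2 = v ⬝ᵥ v := by
  rw [EuclideanSpace.norm_eq, Real.sq_sqrt (by positivity)]
  simp [dotProduct, sq]

set_option maxHeartbeats 2000000 in
/-- If `H̄ + λI` spectrally `(1±Δ)`-approximates `H_cts + λI` with `Δ ∈ (0,1/2)` and
`λ_min(H_cts) = Λ₀ > 0`, then the ridge regression optima `u* = H_cts(H_cts+λI)⁻¹Y` and
`ū* = H̄(H̄+λI)⁻¹Y` satisfy `‖ū* - u*‖₂ ≤ 2λΔ‖Y‖₂/(Λ₀+λ)`. -/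
theorem krr_optima_perturbation {n : ℕ} (Hcts Hbar : Matrix (Fin n) (Fin n) ℝ)
    (hHcts : Hcts.PosSemidef) (hHbar : Hbar.PosSemidef)
    (Λ₀ : ℝ) (hΛ₀ : 0 < Λ₀) (hmin : (Hcts - Λ₀ • 1).PosSemidef)
    (l Δ : ℝ) (hl : 0 < l) (hΔ0 : 0 < Δ) (hΔ : Δ < 1 / 2)
    (h1 : ((Hbar + l • 1) - (1 - Δ) • (Hcts + l • 1)).PosSemidef)
    (h2 : ((1 + Δ) • (Hcts + l • 1) - (Hbar + l • 1)).PosSemidef)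
    (Y ustar ubar : Fin n → ℝ)
    (hustar : ustar = Hcts.mulVec ((Hcts + l • 1)⁻¹.mulVec Y))
    (hubar : ubar = Hbar.mulVec ((Hbar + l • 1)⁻¹.mulVec Y)) :
    ‖(EuclideanSpace.equiv (Fin n) ℝ).symm (ubar - ustar)‖ ≤
      2 * l * Δ * ‖(EuclideanSpace.equiv (Fin n) ℝ).symm Y‖ / (Λ₀ + l) := by
  set A := Hcts + l • (1 : Matrix (Fin n) (Fin n) ℝ) with hAdef
  set B := Hbar + l • (1 : Matrix (Fin n) (Fin n) ℝ) with hBdef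
  have hl1 : (l • (1 : Matrix (Fin n) (Fin n) ℝ)).PosDef := by
    have h : l • (1 : Matrix (Fin n) (Fin n) ℝ) = Matrix.diagonal (fun _ => l) := by
      simp [Matrix.smul_one_eq_diagonal]
    rw [h]; exact Matrix.posDef_diagonal_iff.mpr (fun _ => hl)
  have hApd : A.PosDef := Matrix.PosDef.posSemidef_add hHcts hl1
  have hBpd : B.PosDef := Matrix.PosDef.posSemidef_add hHbar hl1
  set x := A⁻¹ *ᵥ Y with hxdef
  set y := B⁻¹ *ᵥ Y with hydef
  have hAx : A *ᵥ x = Y := by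
    rw [hxdef, Matrix.mulVec_mulVec, Matrix.mul_nonsing_inv _ hApd.det_pos.ne'.isUnit,
      Matrix.one_mulVec]
  have hBy : B *ᵥ y = Y := by
    rw [hydef, Matrix.mulVec_mulVec, Matrix.mul_nonsing_inv _ hBpd.det_pos.ne'.isUnit,
      Matrix.one_mulVec]
  -- rewrite ustar, ubar
  have hust : ustar = Y - l • x := by
    rw [hustar]
    have : Hcts = A - l • (1 : Matrix (Fin n) (Fin n) ℝ) := by rw [hAdef, add_sub_cancel_right]
    rw [this, Matrix.sub_mulVec, hAx]
    congr 1
    rw [Matrix.smul_mulVec, Matrix.one_mulVec]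
  have hubt : ubar = Y - l • y := by
    rw [hubar]
    have : Hbar = B - l • (1 : Matrix (Fin n) (Fin n) ℝ) := by rw [hBdef, add_sub_cancel_right]
    rw [this, Matrix.sub_mulVec, hBy]
    congr 1
    rw [Matrix.smul_mulVec, Matrix.one_mulVec]
  set e := x - y with hedef
  have hdiff : ubar - ustar = l • e := by
    rw [hust, hubt, hedef]; ext i; simp [mul_sub]
  -- quadratic form notation
  set C := B - A with hCdef
  have hCherm : C.IsHermitian := (hBpd.isHermitian).sub (hApd.isHermitian)
  have hAherm : A.IsHermitian := hApd.isHermitian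
  -- pointwise quadratic bounds
  have hCub : ∀ u : Fin n → ℝ, u ⬝ᵥ C *ᵥ u ≤ Δ * (u ⬝ᵥ A *ᵥ u) := by
    intro u
    have := h2.dotProduct_mulVec_nonneg u
    simp only [star_trivial, Matrix.sub_mulVec, dotProduct_sub,
      Matrix.smul_mulVec, dotProduct_smul, smul_eq_mul] at this ⊢
    rw [hCdef]
    simp only [Matrix.sub_mulVec, dotProduct_sub]
    nlinarith [this]
  have hClb : ∀ u : Fin n → ℝ, -(Δ * (u ⬝ᵥ A *ᵥ u)) ≤ u ⬝ᵥ C *ᵥ u := by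
    intro u
    have := h1.dotProduct_mulVec_nonneg u
    simp only [star_trivial, Matrix.sub_mulVec, dotProduct_sub,
      Matrix.smul_mulVec, dotProduct_smul, smul_eq_mul] at this ⊢
    rw [hCdef]
    simp only [Matrix.sub_mulVec, dotProduct_sub]
    nlinarith [this]
  have hAlb : ∀ u : Fin n → ℝ, (Λ₀ + l) * (u ⬝ᵥ u) ≤ u ⬝ᵥ A *ᵥ u := by
    intro u
    have := hmin.dotProduct_mulVec_nonneg u
    simp only [star_trivial, Matrix.sub_mulVec, dotProduct_sub,
      Matrix.smul_mulVec, Matrix.one_mulVec, dotProduct_smul, smul_eq_mul] at this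
    rw [hAdef]
    simp only [Matrix.add_mulVec, dotProduct_add, Matrix.smul_mulVec,
      Matrix.one_mulVec, dotProduct_smul, smul_eq_mul]
    linarith
  set p := x ⬝ᵥ A *ᵥ x with hpdef
  set q := e ⬝ᵥ A *ᵥ e with hqdef
  set r := x ⬝ᵥ C *ᵥ e with hrdef
  -- (1-Δ) q ≤ e⬝Be = r
  have hBe : B *ᵥ e = C *ᵥ x := by
    rw [hedef, hCdef, Matrix.mulVec_sub, Matrix.sub_mulVec, hBy, hAx]
  have hf1 : (1 - Δ) * q ≤ r := by
    have h1e := h1.dotProduct_mulVec_nonneg e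
    simp only [star_trivial, Matrix.sub_mulVec, dotProduct_sub,
      Matrix.smul_mulVec, dotProduct_smul, smul_eq_mul] at h1e
    have heq : e ⬝ᵥ B *ᵥ e = r := by
      rw [hBe, hrdef, dot_symm' C hCherm]
    rw [hAdef] at h1e
    rw [hqdef, hAdef]
    rw [hBdef] at heq
    linarith
  -- bilinear bound: r ≤ Δ²p + q/4
  have hcrossC : e ⬝ᵥ C *ᵥ x = r := by rw [hrdef, dot_symm' C hCherm]
  have hcrossA : e ⬝ᵥ A *ᵥ x = x ⬝ᵥ A *ᵥ e := dot_symm' A hAherm e x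
  have hf2 : r ≤ Δ ^ 2 * p + q / 4 := by
    have hub := hCub ((2 * Δ) • x + e)
    have hlb := hClb ((2 * Δ) • x - e)
    simp only [Matrix.mulVec_add, Matrix.mulVec_sub, Matrix.mulVec_smul,
      dotProduct_add, add_dotProduct, dotProduct_sub,
      sub_dotProduct, smul_dotProduct, dotProduct_smul,
      smul_eq_mul] at hub hlb
    rw [hcrossC] at hub hlb
    rw [hcrossA] at hub hlb
    nlinarith [hub, hlb]
  have hq0 : 0 ≤ q := by
    have := hAlb e
    nlinarith [dot_self_nonneg' e] -- may need replacement
  have hf3 : q ≤ 4 * Δ ^ 2 * p := by nlinarith [hf1, hf2]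
  -- p ≤ YY/(Λ₀+l)
  have hpY : p = x ⬝ᵥ Y := by rw [hpdef, hAx]
  have hCS : (x ⬝ᵥ Y) ^ 2 ≤ (x ⬝ᵥ x) * (Y ⬝ᵥ Y) := by
    simpa [dotProduct, sq] using
      Finset.sum_mul_sq_le_sq_mul_sq Finset.univ x Y
  have hxx : (Λ₀ + l) * (x ⬝ᵥ x) ≤ p := hAlb x
  have hee : (Λ₀ + l) * (e ⬝ᵥ e) ≤ q := hAlb e
  have hYY : 0 ≤ Y ⬝ᵥ Y := dot_self_nonneg' Y
  have hΛl : 0 < Λ₀ + l := by linarith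
  have hp0 : 0 ≤ p := by nlinarith [dot_self_nonneg' x]
  have hpb : (Λ₀ + l) * p ≤ Y ⬝ᵥ Y := by
    rcases eq_or_lt_of_le hp0 with h0 | h0
    · nlinarith
    · have hCS' : p ^ 2 ≤ (x ⬝ᵥ x) * (Y ⬝ᵥ Y) := by rw [hpY]; exact hCS
      have h3 : (Λ₀ + l) * (x ⬝ᵥ x) * (Y ⬝ᵥ Y) ≤ p * (Y ⬝ᵥ Y) :=
        mul_le_mul_of_nonneg_right hxx hYY
      nlinarith [hCS', h3, h0, hΛl]
  -- assemble: (Λ₀+l)^2 (e⬝e) ≤ 4Δ² YY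
  have hfinal : (Λ₀ + l) ^ 2 * (e ⬝ᵥ e) ≤ 4 * Δ ^ 2 * (Y ⬝ᵥ Y) := by nlinarith [hee, hf3, hpb]
  -- norms
  have hNE : ‖(EuclideanSpace.equiv (Fin n) ℝ).symm (ubar - ustar)‖ ^ 2
      = l ^ 2 * (e ⬝ᵥ e) := by
    rw [norm_sq_eq_dot', hdiff]
    simp [smul_dotProduct, dotProduct_smul, smul_eq_mul]
    ring
  have hNY : ‖(EuclideanSpace.equiv (Fin n) ℝ).symm Y‖ ^ 2 = Y ⬝ᵥ Y := norm_sq_eq_dot' Y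
  set NE := ‖(EuclideanSpace.equiv (Fin n) ℝ).symm (ubar - ustar)‖ with hNEdef
  set NY := ‖(EuclideanSpace.equiv (Fin n) ℝ).symm Y‖ with hNYdef
  have hNE0 : 0 ≤ NE := norm_nonneg _
  have hNY0 : 0 ≤ NY := norm_nonneg _
  have hb0 : 0 ≤ 2 * l * Δ * NY := by positivity
  rw [le_div_iff₀ hΛl]
  have hkey : (NE * (Λ₀ + l)) ^ 2 ≤ (2 * l * Δ * NY) ^ 2 := by
    have h' := mul_le_mul_of_nonneg_left hfinal (sq_nonneg l)
    calc (NE * (Λ₀ + l)) ^ 2 = l ^ 2 * ((Λ₀ + l) ^ 2 * (e ⬝ᵥ e)) := by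
          rw [mul_pow, hNE]; ring
      _ ≤ l ^ 2 * (4 * Δ ^ 2 * (Y ⬝ᵥ Y)) := h'
      _ = (2 * l * Δ * NY) ^ 2 := by rw [← hNY]; ring
  exact (pow_le_pow_iff_left₀ (mul_nonneg hNE0 hΛl.le) hb0 two_ne_zero).mp hkey
end

section
/- Let w ∈ ℝ^d be fixed with ‖w̃ - w‖₂ ≤ R for a random w̃ ∼ N(0, I_d), and x ∈ ℝ^d with ‖x‖₂ = 1. Define the event A = {∃u : ‖u - w̃‖₂ ≤ R and 1[xᵀw̃ ≥ 0] ≠ 1[xᵀu ≥ 0]}. Then Pr[A] = Pr_{z∼N(0,1)}[|z| < R] ≤ 2R/√(2π). -/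
open Matrix MeasureTheory ProbabilityTheory

lemma my_lintegral_fin_pi_prod : ∀ {n : ℕ} {E : Fin n → Type} [inst : ∀ i, MeasurableSpace (E i)]
    (μ : ∀ i, Measure (E i)) [∀ i, SigmaFinite (μ i)] (f : ∀ i, E i → ENNReal),
    (∀ i, Measurable (f i)) →
    ∫⁻ x, ∏ i, f i (x i) ∂Measure.pi μ = ∏ i, ∫⁻ y, f i y ∂μ i := by
  intro n
  induction n with
  | zero =>
      intro E inst μ _ f hf
      simp [lintegral_one, Measure.pi_univ]
  | succ n ih =>
      intro E inst μ _ f hf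
      have hmeas : Measurable fun (x : ∀ i, E i) => ∏ i, f i (x i) :=
        Finset.measurable_prod _ fun i _ => (hf i).comp (measurable_pi_apply i)
      calc ∫⁻ x, ∏ i, f i (x i) ∂Measure.pi μ
          = ∫⁻ p, ∏ i, f i ((MeasurableEquiv.piFinSuccAbove E 0).symm p i)
              ∂((μ 0).prod (Measure.pi fun j => μ ((0 : Fin (n+1)).succAbove j))) := by
            rw [← ((measurePreserving_piFinSuccAbove μ 0).symm
              (MeasurableEquiv.piFinSuccAbove E 0)).lintegral_comp hmeas]
        _ = ∫⁻ p : E 0 × (∀ j : Fin n, E (Fin.succ j)),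
              f 0 p.1 * ∏ j, f (Fin.succ j) (p.2 j)
              ∂((μ 0).prod (Measure.pi fun j => μ (Fin.succ j))) := by
            refine lintegral_congr fun p => ?_
            simp [MeasurableEquiv.piFinSuccAbove_symm_apply, Fin.prod_univ_succ]
            rfl
        _ = (∫⁻ y, f 0 y ∂μ 0) * ∏ j, ∫⁻ y, f (Fin.succ j) y ∂μ (Fin.succ j) := by
            rw [lintegral_prod_mul (f := f 0)
              (g := fun y : ∀ j : Fin n, E (Fin.succ j) => ∏ j, f (Fin.succ j) (y j))
              (hf 0).aemeasurable
              (Finset.measurable_prod _ fun j _ =>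
                (hf (Fin.succ j)).comp (measurable_pi_apply j)).aemeasurable,
              ih _ _ fun j => hf (Fin.succ j)]
        _ = ∏ i, ∫⁻ y, f i y ∂μ i := by rw [Fin.prod_univ_succ]

lemma my_pi_gaussian_eq {d : ℕ} :
    (Measure.pi fun _ : Fin d => gaussianReal 0 1) =
      (volume : Measure (Fin d → ℝ)).withDensity
        (fun w => ∏ i, gaussianPDF 0 1 (w i)) := by
  have key : ∀ s : Fin d → Set ℝ, (∀ i, MeasurableSet (s i)) →
      ((volume : Measure (Fin d → ℝ)).withDensity
        (fun w => ∏ i, gaussianPDF 0 1 (w i))) (Set.univ.pi s)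
        = ∏ i, gaussianReal 0 1 (s i) := by
    intro s hs
    rw [withDensity_apply _ (MeasurableSet.univ_pi hs),
      ← lintegral_indicator (MeasurableSet.univ_pi hs) _]
    have hind : ∀ w : Fin d → ℝ,
        (Set.univ.pi s).indicator (fun w => ∏ i, gaussianPDF 0 1 (w i)) w
          = ∏ i, (s i).indicator (gaussianPDF 0 1) (w i) := by
      intro w
      by_cases hw : w ∈ Set.univ.pi s
      · rw [Set.indicator_of_mem hw]
        exact Finset.prod_congr rfl fun i _ =>
          (Set.indicator_of_mem (hw i (Set.mem_univ i)) _).symm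
      · rw [Set.indicator_of_notMem hw]
        obtain ⟨i, hi⟩ : ∃ i, w i ∉ s i := by
          by_contra h
          push_neg at h
          exact hw fun i _ => h i
        exact (Finset.prod_eq_zero (Finset.mem_univ i)
          (Set.indicator_of_notMem hi _)).symm
    simp_rw [hind]
    rw [volume_pi]
    rw [my_lintegral_fin_pi_prod (fun _ : Fin d => (volume : Measure ℝ))
      (fun i => (s i).indicator (gaussianPDF 0 1))
      (fun i => (measurable_gaussianPDF 0 1).indicator (hs i))]
    refine Finset.prod_congr rfl fun i _ => ?_
    rw [lintegral_indicator (hs i) _, gaussianReal_apply 0 one_ne_zero]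
  exact Measure.pi_eq key

lemma my_gaussian_pi_dot {d : ℕ} (x : Fin d → ℝ) (hx : ∑ i, x i ^ 2 = 1)
    {s : Set ℝ} (hs : MeasurableSet s) :
    (Measure.pi fun _ : Fin d => gaussianReal 0 1) ((fun w => x ⬝ᵥ w) ⁻¹' s) =
      gaussianReal 0 1 s := by
  have hd : 0 < d := by
    rcases Nat.eq_zero_or_pos d with h | h
    · subst h; simp at hx
    · exact h
  set j₀ : Fin d := ⟨0, hd⟩
  set e := (MeasurableEquiv.toLp 2 (Fin d → ℝ)).symm
  set x' : EuclideanSpace ℝ (Fin d) := (WithLp.equiv 2 (Fin d → ℝ)).symm x with hx'def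
  have hx'app : ∀ i, x' i = x i := fun i => rfl
  have hnormsum : ∀ v : EuclideanSpace ℝ (Fin d), ∑ i, v i ^ 2 = ‖v‖ ^ 2 := by
    intro v
    rw [EuclideanSpace.norm_eq,
      Real.sq_sqrt (Finset.sum_nonneg fun i _ => sq_nonneg _)]
    simp [Real.norm_eq_abs, sq_abs]
  have hx'norm : ‖x'‖ = 1 := by
    rw [EuclideanSpace.norm_eq]
    simp only [Real.norm_eq_abs, sq_abs, hx'app]
    rw [hx, Real.sqrt_one]
  have o : Orthonormal ℝ (Set.restrict {j₀} fun _ : Fin d => x') := by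
    constructor
    · intro i; exact hx'norm
    · intro i j hij
      exact absurd (Subtype.ext ((Set.mem_singleton_iff.mp i.2).trans
        (Set.mem_singleton_iff.mp j.2).symm)) hij
  obtain ⟨b, hb⟩ := o.exists_orthonormalBasis_extension_of_card_eq
    (by simp [finrank_euclideanSpace])
  have hbj : b j₀ = x' := hb j₀ rfl
  set T' : (Fin d → ℝ) → (Fin d → ℝ) := fun w => e (b.repr (e.symm w)) with hT'def
  have hT'mp : MeasurePreserving T' volume volume :=
    (EuclideanSpace.volume_preserving_symm_measurableEquiv_toLp (Fin d)).comp
      (b.measurePreserving_repr.comp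
        (EuclideanSpace.volume_preserving_symm_measurableEquiv_toLp (Fin d)).symm)
  -- the dot product is the `j₀` coordinate after applying `T'`
  have hdot : ∀ w : Fin d → ℝ, x ⬝ᵥ w = T' w j₀ := by
    intro w
    have : T' w j₀ = b.repr (e.symm w) j₀ := rfl
    rw [this, b.repr_apply_apply, hbj]
    simp only [PiLp.inner_apply, RCLike.inner_apply, conj_trivial]
    exact Finset.sum_congr rfl fun i _ => mul_comm _ _
  -- `T'` preserves the gaussian density
  have hG : ∀ w : Fin d → ℝ,
      (∏ i, gaussianPDF 0 1 (T' w i)) = ∏ i, gaussianPDF 0 1 (w i) := by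
    intro w
    have hsq : ∑ i, (T' w i) ^ 2 = ∑ i, (w i) ^ 2 := by
      have h1 : ∑ i, (T' w i) ^ 2 = ‖b.repr (e.symm w)‖ ^ 2 := hnormsum _
      have h2 : ∑ i, (w i) ^ 2 = ‖e.symm w‖ ^ 2 := hnormsum _
      rw [h1, h2, b.repr.norm_map]
    have hpdf : ∀ y : ℝ, gaussianPDF 0 1 y
        = ENNReal.ofReal ((Real.sqrt (2 * Real.pi))⁻¹ * Real.exp (-(y ^ 2) / 2)) := by
      intro y
      simp only [gaussianPDF, gaussianPDFReal, NNReal.coe_one, mul_one, sub_zero]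
    simp only [hpdf]
    rw [← ENNReal.ofReal_prod_of_nonneg, ← ENNReal.ofReal_prod_of_nonneg]
    · congr 1
      rw [Finset.prod_mul_distrib, Finset.prod_mul_distrib, ← Real.exp_sum, ← Real.exp_sum]
      have : (∑ i, -T' w i ^ 2 / 2) = ∑ i, -w i ^ 2 / 2 := by
        rw [← Finset.sum_div, ← Finset.sum_div, Finset.sum_neg_distrib, Finset.sum_neg_distrib,
          hsq]
      rw [this]
    · intro i _
      positivity
    · intro i _
      positivity
  -- main computation
  set C := (fun v : Fin d → ℝ => v j₀) ⁻¹' s with hCdef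
  have hCmeas : MeasurableSet C := (measurable_pi_apply j₀) hs
  have hA : ((fun w => x ⬝ᵥ w) ⁻¹' s) = T' ⁻¹' C := by
    ext w
    simp only [Set.mem_preimage, hCdef, hdot w]
  have hAmeas : MeasurableSet (T' ⁻¹' C) := hT'mp.measurable hCmeas
  set G : (Fin d → ℝ) → ENNReal := fun w => ∏ i, gaussianPDF 0 1 (w i) with hGdef
  have hGmeas : Measurable G :=
    Finset.measurable_prod _ fun i _ =>
      (measurable_gaussianPDF 0 1).comp (measurable_pi_apply i)
  calc (Measure.pi fun _ : Fin d => gaussianReal 0 1) ((fun w => x ⬝ᵥ w) ⁻¹' s)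
      = (Measure.pi fun _ : Fin d => gaussianReal 0 1) (T' ⁻¹' C) := by rw [hA]
    _ = ∫⁻ w in T' ⁻¹' C, G w ∂volume := by
        rw [my_pi_gaussian_eq, withDensity_apply _ hAmeas]
    _ = ∫⁻ w, (T' ⁻¹' C).indicator G w ∂volume := (lintegral_indicator hAmeas G).symm
    _ = ∫⁻ w, C.indicator G (T' w) ∂volume := by
        refine lintegral_congr fun w => ?_
        by_cases hw : T' w ∈ C
        · rw [Set.indicator_of_mem (Set.mem_preimage.mpr hw), Set.indicator_of_mem hw]
          exact (hG w).symm
        · rw [Set.indicator_of_notMem (fun h => hw (Set.mem_preimage.mp h)),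
            Set.indicator_of_notMem hw]
    _ = ∫⁻ v, C.indicator G v ∂volume := hT'mp.lintegral_comp (hGmeas.indicator hCmeas)
    _ = ∫⁻ v in C, G v ∂volume := lintegral_indicator hCmeas G
    _ = (Measure.pi fun _ : Fin d => gaussianReal 0 1) C := by
        rw [my_pi_gaussian_eq, withDensity_apply _ hCmeas]
    _ = gaussianReal 0 1 s := by
        have : C = Set.univ.pi
            (Function.update (fun _ : Fin d => (Set.univ : Set ℝ)) j₀ s) :=
          Set.eval_preimage
        rw [this, Measure.pi_pi,
          Finset.prod_eq_single j₀
            (fun j _ hj => by simp [Function.update_of_ne hj, measure_univ])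
            (fun h => absurd (Finset.mem_univ j₀) h)]
        simp

/-- Anti-concentration step: for `w̃ ∼ N(0, I_d)` and unit vector `x`, the probability that the
sign of `xᵀu` can differ from that of `xᵀw̃` for some `u` within distance `R` equals
`Pr_{z∼N(0,1)}[|z| < R]`, which is at most `2R/√(2π)`. -/
theorem relu_sign_flip_probability {d : ℕ} (R : ℝ) (hR : 0 ≤ R)
    (x : Fin d → ℝ) (hx : ∑ i, (x i) ^ 2 = 1) :
    (Measure.pi fun _ : Fin d => gaussianReal 0 1)
        {w : Fin d → ℝ | ∃ u : Fin d → ℝ,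
          Real.sqrt (∑ i, (u i - w i) ^ 2) ≤ R ∧ ¬((0 ≤ x ⬝ᵥ w) ↔ (0 ≤ x ⬝ᵥ u))} =
      gaussianReal 0 1 {z : ℝ | |z| < R} ∧
    ((Measure.pi fun _ : Fin d => gaussianReal 0 1)
        {w : Fin d → ℝ | ∃ u : Fin d → ℝ,
          Real.sqrt (∑ i, (u i - w i) ^ 2) ≤ R ∧ ¬((0 ≤ x ⬝ᵥ w) ↔ (0 ≤ x ⬝ᵥ u))}).toReal ≤
      2 * R / Real.sqrt (2 * Real.pi) := by
  have hdotc : ∀ (w : Fin d → ℝ) (c : ℝ),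
      x ⬝ᵥ (fun i => w i - c * x i) = x ⬝ᵥ w - c := by
    intro w c
    simp only [dotProduct, mul_sub, Finset.sum_sub_distrib]
    congr 1
    calc ∑ i, x i * (c * x i) = c * ∑ i, x i ^ 2 := by
          rw [Finset.mul_sum]
          exact Finset.sum_congr rfl fun i _ => by ring
      _ = c := by rw [hx, mul_one]
  have hsumc : ∀ (w : Fin d → ℝ) (c : ℝ),
      ∑ i, ((w i - c * x i) - w i) ^ 2 = c ^ 2 := by
    intro w c
    have h : ∀ i : Fin d, ((w i - c * x i) - w i) ^ 2 = c ^ 2 * x i ^ 2 := fun i => by ring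
    rw [Finset.sum_congr rfl fun i _ => h i, ← Finset.mul_sum, hx, mul_one]
  have hset : {w : Fin d → ℝ | ∃ u : Fin d → ℝ,
        Real.sqrt (∑ i, (u i - w i) ^ 2) ≤ R ∧ ¬((0 ≤ x ⬝ᵥ w) ↔ (0 ≤ x ⬝ᵥ u))}
      = (fun w : Fin d → ℝ => x ⬝ᵥ w) ⁻¹' (Set.Ico (-R) R) := by
    ext w
    simp only [Set.mem_setOf_eq, Set.mem_preimage, Set.mem_Ico]
    constructor
    · rintro ⟨u, hu, hiff⟩
      have hdiff : x ⬝ᵥ u - x ⬝ᵥ w = ∑ i, x i * (u i - w i) := by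
        simp only [dotProduct, mul_sub, Finset.sum_sub_distrib]
      have hcs : (∑ i, x i * (u i - w i)) ^ 2 ≤ ∑ i, (u i - w i) ^ 2 := by
        calc (∑ i, x i * (u i - w i)) ^ 2
            ≤ (∑ i, x i ^ 2) * ∑ i, (u i - w i) ^ 2 :=
              Finset.sum_mul_sq_le_sq_mul_sq _ _ _
          _ = _ := by rw [hx, one_mul]
      have habs : |x ⬝ᵥ u - x ⬝ᵥ w| ≤ R := by
        rw [hdiff]
        calc |∑ i, x i * (u i - w i)|
            = Real.sqrt ((∑ i, x i * (u i - w i)) ^ 2) := (Real.sqrt_sq_eq_abs _).symm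
          _ ≤ Real.sqrt (∑ i, (u i - w i) ^ 2) := Real.sqrt_le_sqrt hcs
          _ ≤ R := hu
      rw [abs_le] at habs
      by_cases hs : 0 ≤ x ⬝ᵥ w
      · have ht : ¬ 0 ≤ x ⬝ᵥ u := fun h => hiff (iff_of_true hs h)
        push_neg at ht
        exact ⟨by linarith, by linarith [habs.1]⟩
      · have ht : 0 ≤ x ⬝ᵥ u := by
          by_contra h
          exact hiff (iff_of_false hs h)
        push_neg at hs
        exact ⟨by linarith [habs.2], by linarith⟩
    · rintro ⟨h1, h2⟩
      by_cases hs : 0 ≤ x ⬝ᵥ w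
      · refine ⟨fun i => w i - ((x ⬝ᵥ w + R) / 2) * x i, ?_, ?_⟩
        · rw [hsumc w _, Real.sqrt_sq (by linarith)]
          linarith
        · rw [hdotc w _]
          intro hif
          have := hif.mp hs
          linarith
      · refine ⟨fun i => w i - (x ⬝ᵥ w) * x i, ?_, ?_⟩
        · rw [hsumc w _, Real.sqrt_sq_eq_abs]
          push_neg at hs
          rw [abs_of_neg hs]
          linarith
        · rw [hdotc w _, sub_self]
          intro hif
          exact hs (hif.mpr le_rfl)
  have hIooset : {z : ℝ | |z| < R} = Set.Ioo (-R) R := by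
    ext z
    simp only [Set.mem_setOf_eq, Set.mem_Ioo]
    exact abs_lt
  have hsing : gaussianReal 0 1 {(-R : ℝ)} = 0 :=
    gaussianReal_absolutelyContinuous 0 one_ne_zero Real.volume_singleton
  have hIco : gaussianReal 0 1 (Set.Ico (-R) R) = gaussianReal 0 1 (Set.Ioo (-R) R) := by
    refine le_antisymm ?_ (measure_mono Set.Ioo_subset_Ico_self)
    calc gaussianReal 0 1 (Set.Ico (-R) R)
        ≤ gaussianReal 0 1 (Set.Ioo (-R) R ∪ {-R}) := by
          refine measure_mono fun z hz => ?_
          rcases eq_or_lt_of_le hz.1 with h | h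
          · exact Or.inr (by simp [h.symm])
          · exact Or.inl ⟨h, hz.2⟩
      _ ≤ gaussianReal 0 1 (Set.Ioo (-R) R) + gaussianReal 0 1 {-R} :=
          measure_union_le _ _
      _ = gaussianReal 0 1 (Set.Ioo (-R) R) := by rw [hsing, add_zero]
  have h1 : (Measure.pi fun _ : Fin d => gaussianReal 0 1)
      {w : Fin d → ℝ | ∃ u : Fin d → ℝ,
        Real.sqrt (∑ i, (u i - w i) ^ 2) ≤ R ∧ ¬((0 ≤ x ⬝ᵥ w) ↔ (0 ≤ x ⬝ᵥ u))}
      = gaussianReal 0 1 {z : ℝ | |z| < R} := by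
    rw [hset, my_gaussian_pi_dot x hx measurableSet_Ico, hIco, hIooset]
  refine ⟨h1, ?_⟩
  rw [h1, hIooset]
  have hpdfle : ∀ z : ℝ, gaussianPDF 0 1 z
      ≤ ENNReal.ofReal ((Real.sqrt (2 * Real.pi))⁻¹) := by
    intro z
    refine ENNReal.ofReal_le_ofReal ?_
    simp only [gaussianPDFReal, NNReal.coe_one, mul_one, sub_zero]
    calc (Real.sqrt (2 * Real.pi))⁻¹ * Real.exp (-z ^ 2 / 2)
        ≤ (Real.sqrt (2 * Real.pi))⁻¹ * 1 := by
          refine mul_le_mul_of_nonneg_left ?_ (inv_nonneg.mpr (Real.sqrt_nonneg _))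
          rw [Real.exp_le_one_iff]
          nlinarith [sq_nonneg z]
      _ = (Real.sqrt (2 * Real.pi))⁻¹ := mul_one _
  have hb : gaussianReal 0 1 (Set.Ioo (-R) R)
      ≤ ENNReal.ofReal ((Real.sqrt (2 * Real.pi))⁻¹) * ENNReal.ofReal (2 * R) := by
    rw [gaussianReal_apply 0 one_ne_zero]
    calc ∫⁻ z in Set.Ioo (-R) R, gaussianPDF 0 1 z
        ≤ ∫⁻ _ in Set.Ioo (-R) R, ENNReal.ofReal ((Real.sqrt (2 * Real.pi))⁻¹) :=
          setLIntegral_mono measurable_const fun z _ => hpdfle z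
      _ = ENNReal.ofReal ((Real.sqrt (2 * Real.pi))⁻¹) * volume (Set.Ioo (-R) R) :=
          setLIntegral_const _ _
      _ = ENNReal.ofReal ((Real.sqrt (2 * Real.pi))⁻¹) * ENNReal.ofReal (2 * R) := by
          rw [Real.volume_Ioo]
          congr 1
          ring
  calc (gaussianReal 0 1 (Set.Ioo (-R) R)).toReal
      ≤ (ENNReal.ofReal ((Real.sqrt (2 * Real.pi))⁻¹) * ENNReal.ofReal (2 * R)).toReal :=
        ENNReal.toReal_mono
          (ENNReal.mul_ne_top ENNReal.ofReal_ne_top ENNReal.ofReal_ne_top) hb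
    _ = (Real.sqrt (2 * Real.pi))⁻¹ * (2 * R) := by
        rw [ENNReal.toReal_mul,
          ENNReal.toReal_ofReal (inv_nonneg.mpr (Real.sqrt_nonneg _)),
          ENNReal.toReal_ofReal (by linarith)]
    _ = 2 * R / Real.sqrt (2 * Real.pi) := inv_mul_eq_div _ _
end
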